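/- Let N be a positive natural number, let H be a symmetric positive definite N×N real matrix, let D̃ be an N×N real matrix, let C be a symmetric positive semidefinite N×N real matrix, and let ε ≥ 0. Define A_D := -ε • H⁻¹ * D̃ᵀ * C * D̃. Suppose u, w ∈ ℝᴺ and the baseline semi-discretization P satisfies the entropy-stability bound wᵀ ⬝ᵥ (H *ᵥ (P *ᵥ u)) ≤ 0 (the entropy variables w contracted against the baseline right-hand side are nonpositive). Then the scheme augmented with dissipation acting on the entropy variables remains entropy-stable: wᵀ ⬝ᵥ (H *ᵥ (P *ᵥ u + A_D *ᵥ w)) ≤ 0, since wᵀ ⬝ᵥ (H *ᵥ (A_D *ᵥ w)) = -ε · (D̃ *ᵥ w)ᵀ ⬝ᵥ (C *ᵥ (D̃ *ᵥ w)) ≤ 0. -/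

import Mathlib

open Matrix

/-- Entropy stability: augmenting an entropy-stable semi-discretization with the
artificial dissipation operator `A_D = -ε • H⁻¹ * D̃ᵀ * C * D̃` acting on the
entropy variables `w` results in an entropy-stable semi-discrete scheme for a
positive semidefinite `C`. -/
theorem dissipation_entropy_stable
    (N : ℕ) (hN : 0 < N)
    (H Dt C P : Matrix (Fin N) (Fin N) ℝ) (ε : ℝ) (hε : 0 ≤ ε)
    (hHsymm : Hᵀ = H)
    (hHpos : ∀ v : Fin N → ℝ, v ≠ 0 → 0 < v ⬝ᵥ (H *ᵥ v))
    (hCsymm : Cᵀ = C)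
    (hCpsd : ∀ v : Fin N → ℝ, 0 ≤ v ⬝ᵥ (C *ᵥ v))
    (u w : Fin N → ℝ)
    (hP : w ⬝ᵥ (H *ᵥ (P *ᵥ u)) ≤ 0) :
    w ⬝ᵥ (H *ᵥ (P *ᵥ u + ((-ε) • (H⁻¹ * Dtᵀ * C * Dt)) *ᵥ w)) ≤ 0 ∧
    w ⬝ᵥ (H *ᵥ (((-ε) • (H⁻¹ * Dtᵀ * C * Dt)) *ᵥ w))
      = -ε * ((Dt *ᵥ w) ⬝ᵥ (C *ᵥ (Dt *ᵥ w))) ∧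
    -ε * ((Dt *ᵥ w) ⬝ᵥ (C *ᵥ (Dt *ᵥ w))) ≤ 0 := by
  have hPD : H.PosDef := by
    refine Matrix.PosDef.of_dotProduct_mulVec_pos (by simpa [Matrix.IsHermitian] using hHsymm) ?_
    intro v hv
    simpa using hHpos v hv
  have hdet : IsUnit H.det := isUnit_iff_ne_zero.mpr (ne_of_gt hPD.det_pos)
  have hHinv : H * H⁻¹ = 1 := Matrix.mul_nonsing_inv H hdet
  have key : w ⬝ᵥ (H *ᵥ (((-ε) • (H⁻¹ * Dtᵀ * C * Dt)) *ᵥ w))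
      = -ε * ((Dt *ᵥ w) ⬝ᵥ (C *ᵥ (Dt *ᵥ w))) := by
    have h1 : H * ((-ε) • (H⁻¹ * Dtᵀ * C * Dt)) = (-ε) • (Dtᵀ * C * Dt) := by
      rw [Matrix.mul_smul]
      congr 1
      calc H * (H⁻¹ * Dtᵀ * C * Dt) = (H * H⁻¹) * (Dtᵀ * C * Dt) := by
            noncomm_ring
        _ = Dtᵀ * C * Dt := by rw [hHinv, one_mul]
    rw [Matrix.mulVec_mulVec, h1, Matrix.smul_mulVec, dotProduct_smul,
      smul_eq_mul]
    congr 1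
    rw [show Dtᵀ * C * Dt = Dtᵀ * (C * Dt) from Matrix.mul_assoc _ _ _, ← Matrix.mulVec_mulVec,
      Matrix.dotProduct_mulVec, Matrix.vecMul_transpose,
      ← Matrix.mulVec_mulVec]
  have hnonpos : -ε * ((Dt *ᵥ w) ⬝ᵥ (C *ᵥ (Dt *ᵥ w))) ≤ 0 := by
    have := hCpsd (Dt *ᵥ w)
    nlinarith
  refine ⟨?_, key, hnonpos⟩
  rw [Matrix.mulVec_add, dotProduct_add]
  calc w ⬝ᵥ (H *ᵥ (P *ᵥ u)) + w ⬝ᵥ (H *ᵥ (((-ε) • (H⁻¹ * Dtᵀ * C * Dt)) *ᵥ w))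
      ≤ 0 + 0 := add_le_add hP (key ▸ hnonpos)
    _ = 0 := by ring
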